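/- arXiv:0803.4182 — 5 statements merged into one kernel-verified Lean document; each statement's English description precedes it below -/
import Mathlib

section
/- With P_j^i[k] the weighted sum over partitions of length i, first part j, containing at least one part of each size j−1,...,j−k (weights given by critical positions), and letting ↑P denote the substitution b_u ← b_{u+1} for all u, one has for k ≥ 1: P_j^i[k] = (a_j + b_1)·↑P_j^{i-1}[k] + ↑P_{j-1}^{i-1}[k-1]. -/
open Finset

attribute [local instance] Classical.propDecidable

noncomputable section

/-- Critical positions of a partition (as a function `Fin n → ℕ`): 0-indexed
positions `u ≥ 1` with `lam u = lam (u-1)`. -/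
def crit {n : ℕ} (lam : Fin n → ℕ) : Finset (Fin n) :=
  univ.filter fun u => 1 ≤ u.1 ∧
    lam u = lam ⟨u.1 - 1, Nat.lt_of_le_of_lt (Nat.sub_le u.1 1) u.2⟩

/-- The weight of a partition: the product over critical positions `u` of
`a (λ_u) + b_{u-1}` (paper's 1-indexed convention; here `u` is 0-indexed, so the
factor is `a (lam u) + b u`). -/
def wt {R : Type*} [CommRing R] (a b : ℕ → R) {n : ℕ} (lam : Fin n → ℕ) : R :=
  ∏ u ∈ crit lam, (a (lam u) + b u.1)

/-- The finset of partitions of length `i`, with first part `j`, positive parts, and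
at least one part equal to `j - l` for each `l = 1, …, k`. -/
def PartSet (j i k : ℕ) : Finset (Fin i → ℕ) :=
  (Fintype.piFinset fun _ : Fin i => Finset.Icc 1 j).filter fun lam =>
    (∀ u v : Fin i, u ≤ v → lam v ≤ lam u) ∧
    (∃ h : 0 < i, lam ⟨0, h⟩ = j) ∧
    (∀ l, 1 ≤ l → l ≤ k → ∃ u, lam u = j - l)

/-- `P_j^i[k]`: the weighted sum over `PartSet j i k`. -/
def P {R : Type*} [CommRing R] (a b : ℕ → R) (j i k : ℕ) : R :=
  ∑ lam ∈ PartSet j i k, wt a b lam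

lemma wt_cons {R : Type*} [CommRing R] (a b : ℕ → R) {m : ℕ} (x : ℕ) (t : Fin (m+1) → ℕ) :
    wt a b (Fin.cons x t) =
      (if t 0 = x then a x + b 1 else 1) * wt a (fun u => b (u+1)) t := by
  unfold wt crit
  rw [Finset.prod_filter, Finset.prod_filter, Fin.prod_univ_succ, Fin.prod_univ_succ,
    Fin.prod_univ_succ]
  have hcons : ∀ (i : ℕ) (h : i < m + 1),
      (Fin.cons x t : Fin (m+2) → ℕ) ⟨i+1, Nat.succ_lt_succ h⟩ = t ⟨i, h⟩ := by
    intro i h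
    exact @Fin.cons_succ (m+1) (fun _ => ℕ) x t ⟨i, h⟩
  simp only [Fin.val_succ, Fin.val_zero, Nat.add_sub_cancel, Fin.cons_succ, Fin.cons_zero]
  have h1 : (Fin.cons x t : Fin (m+2) → ℕ) ⟨0, by omega⟩ = x := rfl
  simp only [h1, hcons, Fin.eta]
  have hf : ¬((1:ℕ) ≤ 0) := by omega
  have ht : ∀ n : ℕ, 1 ≤ n + 1 := fun n => by omega
  simp only [hf, ht, false_and, true_and, if_false, one_mul]
  have hP : ∀ v : Fin m, ∀ (p : (v:ℕ) + 1 < m + 2) (q : (v:ℕ) < m + 1),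
      (if t v.succ = (Fin.cons x t : Fin (m+2) → ℕ) ⟨v.1+1, p⟩ then a (t v.succ) + b (v.1+1+1) else 1)
        = (if t v.succ = t ⟨v.1, q⟩ then a (t v.succ) + b (v.1+1+1) else 1) := by
    intro v p q
    rw [hcons v.1 q]
  rw [Finset.prod_congr rfl fun v _ => hP v (by omega) (by omega)]
  split_ifs with h
  · rw [h]
  · rw [one_mul]

lemma mem_PartSet {j i k : ℕ} {lam : Fin i → ℕ} :
    lam ∈ PartSet j i k ↔ (∀ v, 1 ≤ lam v ∧ lam v ≤ j) ∧
      (∀ u v : Fin i, u ≤ v → lam v ≤ lam u) ∧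
      (∃ h : 0 < i, lam ⟨0, h⟩ = j) ∧
      (∀ l, 1 ≤ l → l ≤ k → ∃ u, lam u = j - l) := by
  simp [PartSet, Fintype.mem_piFinset, Finset.mem_Icc]


/-- The recurrence for `P_j^i[k]`, `k ≥ 1`:
`P_j^i[k] = (a_j + b_1) ↑P_j^{i-1}[k] + ↑P_{j-1}^{i-1}[k-1]`, where `↑` is the
substitution `b_u ← b_{u+1}`. -/
theorem statement3 {R : Type*} [CommRing R] (a b : ℕ → R) (j i k : ℕ)
    (hk : 1 ≤ k) (hj : k < j) (hi : k < i) :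
    P a b j i k =
      (a j + b 1) * P a (fun u => b (u + 1)) j (i - 1) k +
        P a (fun u => b (u + 1)) (j - 1) (i - 1) (k - 1) := by
  obtain ⟨n, rfl⟩ : ∃ n, i = n + 2 := ⟨i - 2, by omega⟩
  have hj2 : 2 ≤ j := by omega
  have hi1 : n + 2 - 1 = n + 1 := rfl
  rw [hi1]
  unfold P
  rw [← Finset.sum_filter_add_sum_filter_not (PartSet j (n+2) k)
    (fun lam => lam 1 = j), Finset.mul_sum]
  congr 1
  · -- second part equals j
    refine Finset.sum_nbij' (i := fun lam (v : Fin (n+1)) => lam v.succ)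
      (j := fun t => (Fin.cons j t : Fin (n+2) → ℕ)) ?_ ?_ ?_ ?_ ?_
    · intro lam hlam
      rw [Finset.mem_filter] at hlam
      obtain ⟨hmem, h1⟩ := hlam
      rw [mem_PartSet] at hmem ⊢
      obtain ⟨hb, hmono, ⟨hpos, h0⟩, hparts⟩ := hmem
      have h00 : lam 0 = j := h0
      refine ⟨fun v => hb v.succ, fun u v huv => hmono u.succ v.succ (by
        simpa [Fin.succ_le_succ_iff] using huv), ⟨by omega, h1⟩, ?_⟩
      intro l hl1 hlk
      obtain ⟨u, hu⟩ := hparts l hl1 hlk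
      have hu0 : 1 ≤ u.1 := by
        by_contra hc
        have hue : u = 0 := by
          apply Fin.ext
          exact Nat.lt_one_iff.mp (Nat.lt_of_not_le hc)
        rw [hue, h00] at hu
        omega
      refine ⟨⟨u.1 - 1, by omega⟩, ?_⟩
      have hsu : Fin.succ (⟨u.1 - 1, by omega⟩ : Fin (n+1)) = u := by
        apply Fin.ext
        simp
        omega
      show lam (Fin.succ ⟨u.1 - 1, by omega⟩) = j - l
      rw [hsu]
      exact hu
    · intro t ht
      rw [mem_PartSet] at ht
      obtain ⟨hb, hmono, ⟨hpos, h0⟩, hparts⟩ := ht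
      have h00 : t 0 = j := h0
      rw [Finset.mem_filter, mem_PartSet]
      have hbj : ∀ v : Fin (n+2), 1 ≤ (Fin.cons j t : Fin (n+2) → ℕ) v ∧
          (Fin.cons j t : Fin (n+2) → ℕ) v ≤ j := by
        intro v
        induction v using Fin.cases with
        | zero => simp; omega
        | succ w => simpa using hb w
      refine ⟨⟨hbj, ?_, ⟨Nat.succ_pos _, rfl⟩, ?_⟩, ?_⟩
      · intro u v huv
        induction u using Fin.cases with
        | zero => exact (hbj v).2
        | succ w =>
          induction v using Fin.cases with
          | zero =>
            exfalso
            have := huv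
            simp [Fin.le_def] at this
          | succ w' =>
            simp only [Fin.cons_succ]
            exact hmono w w' (by simpa [Fin.succ_le_succ_iff] using huv)
      · intro l hl1 hlk
        obtain ⟨u, hu⟩ := hparts l hl1 hlk
        exact ⟨u.succ, by simpa using hu⟩
      · show (Fin.cons j t : Fin (n+2) → ℕ) 1 = j
        rw [show (1 : Fin (n+2)) = Fin.succ 0 from rfl, Fin.cons_succ]
        exact h00
    · intro lam hlam
      rw [Finset.mem_filter, mem_PartSet] at hlam
      obtain ⟨⟨-, -, ⟨hpos, h0⟩, -⟩, -⟩ := hlam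
      funext v
      induction v using Fin.cases with
      | zero => exact h0.symm
      | succ w => simp
    · intro t ht
      funext v
      simp
    · intro lam hlam
      rw [Finset.mem_filter] at hlam
      obtain ⟨hmem, h1⟩ := hlam
      rw [mem_PartSet] at hmem
      obtain ⟨-, -, ⟨hpos, h0⟩, -⟩ := hmem
      have hlc : lam = (Fin.cons j (fun v : Fin (n+1) => lam v.succ) : Fin (n+2) → ℕ) := by
        funext v
        induction v using Fin.cases with
        | zero => exact h0
        | succ w => simp
      conv_lhs => rw [hlc]
      rw [wt_cons]
      rw [if_pos (show lam (Fin.succ 0) = j from h1)]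
  · refine Finset.sum_nbij' (i := fun lam (v : Fin (n+1)) => lam v.succ)
      (j := fun t => (Fin.cons j t : Fin (n+2) → ℕ)) ?_ ?_ ?_ ?_ ?_
    · intro lam hlam
      rw [Finset.mem_filter] at hlam
      obtain ⟨hmem, h1⟩ := hlam
      rw [mem_PartSet] at hmem
      obtain ⟨hb, hmono, ⟨hpos, h0⟩, hparts⟩ := hmem
      have h00 : lam 0 = j := h0
      have hone : ∀ u : Fin (n+2), 1 ≤ u.1 → (1 : Fin (n+2)) ≤ u := by
        intro u hu
        rw [Fin.le_def]
        simpa using hu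
      have hupos : ∀ l u, 1 ≤ l → l ≤ k → lam u = j - l → 1 ≤ u.1 := by
        intro l u hl1 hlk hu
        by_contra hc
        have hue : u = 0 := by
          apply Fin.ext
          exact Nat.lt_one_iff.mp (Nat.lt_of_not_le hc)
        rw [hue, h00] at hu
        omega
      have hl1 : lam 1 = j - 1 := by
        obtain ⟨u, hu⟩ := hparts 1 le_rfl hk
        have hu0 : 1 ≤ u.1 := hupos 1 u le_rfl hk hu
        have h2 : lam u ≤ lam 1 := hmono 1 u (hone u hu0)
        have h3 := (hb 1).2
        omega
      rw [mem_PartSet]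
      beta_reduce
      refine ⟨?_, ?_, ⟨Nat.succ_pos _, ?_⟩, ?_⟩
      pick_goal 2
      · exact fun u v huv => hmono u.succ v.succ (by
          simpa [Fin.succ_le_succ_iff] using huv)
      · intro v
        refine ⟨(hb v.succ).1, ?_⟩
        have h2 : lam v.succ ≤ lam 1 := hmono 1 v.succ (hone v.succ (by simp))
        omega
      · show lam (Fin.succ 0) = j - 1
        exact hl1
      · intro l hla hlb
        obtain ⟨u, hu⟩ := hparts (l+1) (by omega) (by omega)
        have hu0 : 1 ≤ u.1 := hupos (l+1) u (by omega) (by omega) hu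
        refine ⟨⟨u.1 - 1, by omega⟩, ?_⟩
        have hsu : Fin.succ (⟨u.1 - 1, by omega⟩ : Fin (n+1)) = u := by
          apply Fin.ext
          simp
          omega
        show lam (Fin.succ ⟨u.1 - 1, by omega⟩) = j - 1 - l
        rw [hsu]
        omega
    · intro t ht
      rw [mem_PartSet] at ht
      obtain ⟨hb, hmono, ⟨hpos, h0⟩, hparts⟩ := ht
      have h00 : t 0 = j - 1 := h0
      rw [Finset.mem_filter, mem_PartSet]
      have hbj : ∀ v : Fin (n+2), 1 ≤ (Fin.cons j t : Fin (n+2) → ℕ) v ∧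
          (Fin.cons j t : Fin (n+2) → ℕ) v ≤ j := by
        intro v
        induction v using Fin.cases with
        | zero => simp; omega
        | succ w =>
          have := hb w
          simp only [Fin.cons_succ]
          omega
      refine ⟨⟨hbj, ?_, ⟨Nat.succ_pos _, rfl⟩, ?_⟩, ?_⟩
      · intro u v huv
        induction u using Fin.cases with
        | zero => exact (hbj v).2
        | succ w =>
          induction v using Fin.cases with
          | zero =>
            exfalso
            have := huv
            simp [Fin.le_def] at this
          | succ w' =>
            simp only [Fin.cons_succ]
            exact hmono w w' (by simpa [Fin.succ_le_succ_iff] using huv)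
      · intro l hla hlb
        by_cases hl : l = 1
        · refine ⟨Fin.succ 0, ?_⟩
          show (Fin.cons j t : Fin (n+2) → ℕ) (Fin.succ 0) = j - l
          rw [Fin.cons_succ]
          rw [hl]
          exact h00
        · obtain ⟨u, hu⟩ := hparts (l-1) (by omega) (by omega)
          refine ⟨u.succ, ?_⟩
          show (Fin.cons j t : Fin (n+2) → ℕ) u.succ = j - l
          rw [Fin.cons_succ]
          omega
      · show ¬ (Fin.cons j t : Fin (n+2) → ℕ) 1 = j
        rw [show (1 : Fin (n+2)) = Fin.succ 0 from rfl, Fin.cons_succ, h00]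
        omega
    · intro lam hlam
      rw [Finset.mem_filter, mem_PartSet] at hlam
      obtain ⟨⟨-, -, ⟨hpos, h0⟩, -⟩, -⟩ := hlam
      funext v
      induction v using Fin.cases with
      | zero => exact h0.symm
      | succ w => simp
    · intro t ht
      funext v
      simp
    · intro lam hlam
      rw [Finset.mem_filter] at hlam
      obtain ⟨hmem, h1⟩ := hlam
      rw [mem_PartSet] at hmem
      obtain ⟨-, -, ⟨hpos, h0⟩, -⟩ := hmem
      have hlc : lam = (Fin.cons j (fun v : Fin (n+1) => lam v.succ) : Fin (n+2) → ℕ) := by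
        funext v
        induction v using Fin.cases with
        | zero => exact h0
        | succ w => simp
      conv_lhs => rw [hlc]
      rw [wt_cons]
      rw [if_neg (show ¬ lam (Fin.succ 0) = j from h1), one_mul]

end
end

section
/- (Gessel–Viennot cancellation for triangular tableaux) The signed weighted sum over all tuples (λ^{(1)},...,λ^{(m)}) of partitions of lengths 1,...,m with parts in {1,...,m} whose first parts form a permutation, equals the same sum restricted to non-intersecting tuples (those where for each j, the j-th parts of λ^{(j)},...,λ^{(m)} are pairwise distinct). Equivalently, the signed weighted sum over intersecting tuples is zero. -/
open Finset

attribute [local instance] Classical.propDecidable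

noncomputable section

/-- A triangular tableau: row `i` (0-indexed) has `i+1` parts. -/
abbrev Tab (m : ℕ) := ∀ i : Fin m, Fin (i.1 + 1) → ℕ

/-- The finset of weakly decreasing rows of length `i+1` with parts in `{1,…,m}`. -/
def rowFinset (m : ℕ) (i : Fin m) : Finset (Fin (i.1 + 1) → ℕ) :=
  (Fintype.piFinset fun _ => Finset.Icc 1 m).filter fun lam =>
    ∀ u v : Fin (i.1 + 1), u ≤ v → lam v ≤ lam u

/-- The finset of triangular tableaux with rows of lengths `1,…,m` and parts in `{1,…,m}`. -/
def tabFinset (m : ℕ) : Finset (Tab m) :=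
  Fintype.piFinset fun i => rowFinset m i

/-- Non-intersecting: for every column `j` (0-indexed), the entries in column `j`
of the rows `j,…,m-1` are pairwise distinct. -/
def NonInt {m : ℕ} (T : Tab m) : Prop :=
  ∀ (i i' : Fin m) (j : ℕ) (h : j ≤ i.1) (h' : j ≤ i'.1),
    T i ⟨j, Nat.lt_succ_of_le h⟩ = T i' ⟨j, Nat.lt_succ_of_le h'⟩ → i = i'

/-- The sequence of first parts of a triangular tableau. -/
def firsts {m : ℕ} (T : Tab m) : Fin m → ℕ := fun i => T i ⟨0, Nat.succ_pos _⟩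

/-- The sign of a sequence, as `(-1)` to the number of inversions.  When the
sequence is a bijection onto `{1,…,m}` this is the sign of the corresponding
permutation. -/
def sgn {m : ℕ} (f : Fin m → ℕ) : ℤ :=
  (-1) ^ ((univ : Finset (Fin m × Fin m)).filter fun p => p.1 < p.2 ∧ f p.2 < f p.1).card


/-! ### Sign lemmas -/

lemma sgn_eq_signAux {m : ℕ} (f : Fin m → ℕ) (σ : Equiv.Perm (Fin m))
    (h : ∀ p q, f p < f q ↔ σ p < σ q) : sgn f = (Equiv.Perm.signAux σ : ℤ) := by
  have hσinj : Function.Injective σ := σ.injective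
  unfold sgn Equiv.Perm.signAux
  rw [← Finset.prod_filter_mul_prod_filter_not (Equiv.Perm.finPairsLT m)
    (fun x => σ x.1 ≤ σ x.2)]
  rw [Finset.prod_congr rfl (fun x hx => if_pos (Finset.mem_filter.mp hx).2),
    Finset.prod_congr rfl (fun x hx => if_neg (Finset.mem_filter.mp hx).2),
    Finset.prod_const, Finset.prod_const, one_pow, mul_one]
  have hcard : ((univ : Finset (Fin m × Fin m)).filter fun p => p.1 < p.2 ∧ f p.2 < f p.1).card
      = ((Equiv.Perm.finPairsLT m).filter fun x => σ x.1 ≤ σ x.2).card := by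
    apply Finset.card_bij' (fun p _ => (⟨p.2, p.1⟩ : Σ _ : Fin m, Fin m))
      (fun x _ => ((x.2, x.1) : Fin m × Fin m))
    · intro p hp
      simp only [Finset.mem_filter, Finset.mem_univ, true_and] at hp
      refine Finset.mem_filter.mpr ⟨Equiv.Perm.mem_finPairsLT.mpr ?_, ?_⟩
      · exact hp.1
      · exact le_of_lt ((h _ _).mp hp.2)
    · intro x hx
      simp only [Finset.mem_filter, Equiv.Perm.mem_finPairsLT] at hx
      refine Finset.mem_filter.mpr ⟨Finset.mem_univ _, hx.1, ?_⟩
      have hne : σ x.2 ≠ σ x.1 := fun hh => absurd (hσinj hh) (ne_of_lt hx.1)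
      exact (h _ _).mpr (lt_of_le_of_ne hx.2 hne.symm)
    · intro p _; rfl
    · intro x _; rfl
  rw [hcard]
  push_cast
  rfl

lemma sgn_comp_swap {m : ℕ} (f : Fin m → ℕ) (hf : Function.Injective f) {x y : Fin m}
    (hxy : x ≠ y) : sgn (f ∘ Equiv.swap x y) = - sgn f := by
  classical
  set s : Finset ℕ := Finset.image f univ with hs
  have hcard : s.card = m := by
    rw [hs, Finset.card_image_of_injective _ hf, card_univ, Fintype.card_fin]
  set e := s.orderIsoOfFin hcard with he
  have hmem : ∀ i, f i ∈ s := fun i => Finset.mem_image_of_mem f (mem_univ i)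
  let g : Fin m → Fin m := fun i => e.symm ⟨f i, hmem i⟩
  have hginj : Function.Injective g := by
    intro p q hpq
    have := e.symm.injective hpq
    exact hf (congrArg Subtype.val this)
  have hg : Function.Bijective g := Finite.injective_iff_bijective.mp hginj
  set σ := Equiv.ofBijective g hg with hσ
  have key : ∀ p q, f p < f q ↔ σ p < σ q := by
    intro p q
    have : σ p < σ q ↔ (⟨f p, hmem p⟩ : s) < ⟨f q, hmem q⟩ := e.symm.lt_iff_lt
    rw [this, Subtype.mk_lt_mk]
  have key2 : ∀ p q, (f ∘ Equiv.swap x y) p < (f ∘ Equiv.swap x y) q ↔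
      (σ * Equiv.swap x y) p < (σ * Equiv.swap x y) q := by
    intro p q; exact key _ _
  rw [sgn_eq_signAux f σ key, sgn_eq_signAux _ _ key2, Equiv.Perm.signAux_mul,
    Equiv.Perm.signAux_swap hxy]
  push_cast
  ring

/-! ### Total entry function -/

/-- `ent T n k` is the `k`-th entry of row `n` (0 if out of range). -/
def ent {m : ℕ} (T : Tab m) (n k : ℕ) : ℕ :=
  if h : n < m ∧ k < n + 1 then T ⟨n, h.1⟩ ⟨k, h.2⟩ else 0

lemma ent_eq {m : ℕ} (T : Tab m) (i : Fin m) (u : Fin (i.1 + 1)) :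
    ent T i.1 u.1 = T i u := by
  unfold ent
  rw [dif_pos ⟨i.2, u.2⟩]

lemma row_mono {m : ℕ} {T : Tab m} (hT : T ∈ tabFinset m) {n k l : ℕ} (hn : n < m)
    (hkl : k ≤ l) (hl : l < n + 1) : ent T n l ≤ ent T n k := by
  have h := Fintype.mem_piFinset.mp hT ⟨n, hn⟩
  rw [rowFinset, Finset.mem_filter] at h
  have := h.2 ⟨k, Nat.lt_of_le_of_lt hkl hl⟩ ⟨l, hl⟩ hkl
  unfold ent
  rw [dif_pos ⟨hn, hl⟩, dif_pos ⟨hn, by omega⟩]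
  exact this

lemma ent_mem_Icc {m : ℕ} {T : Tab m} (hT : T ∈ tabFinset m) {n k : ℕ} (hn : n < m)
    (hk : k < n + 1) : ent T n k ∈ Finset.Icc 1 m := by
  have h := Fintype.mem_piFinset.mp hT ⟨n, hn⟩
  rw [rowFinset, Finset.mem_filter] at h
  have := Fintype.mem_piFinset.mp h.1 ⟨k, hk⟩
  unfold ent
  rw [dif_pos ⟨hn, hk⟩]
  exact this

/-! ### The prefix swap -/

/-- Swap the first `j` entries of rows `n1` and `n2`. -/
def swapT {m : ℕ} (T : Tab m) (n1 n2 j : ℕ) : Tab m := fun i u =>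
  if u.1 < j then
    (if i.1 = n1 then ent T n2 u.1 else if i.1 = n2 then ent T n1 u.1 else T i u)
  else T i u

lemma ent_swapT {m : ℕ} (T : Tab m) (n1 n2 j : ℕ) (h1 : n1 < m) (h2 : n2 < m)
    (hj1 : j ≤ n1) (hj2 : j ≤ n2) (n k : ℕ) :
    ent (swapT T n1 n2 j) n k =
      if k < j then (if n = n1 then ent T n2 k else if n = n2 then ent T n1 k else ent T n k)
      else ent T n k := by
  by_cases h : n < m ∧ k < n + 1
  · conv_lhs => rw [ent, dif_pos h]
    show (if k < j then (if n = n1 then ent T n2 k else if n = n2 then ent T n1 k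
        else T ⟨n, h.1⟩ ⟨k, h.2⟩) else T ⟨n, h.1⟩ ⟨k, h.2⟩) = _
    have hTnk : T ⟨n, h.1⟩ ⟨k, h.2⟩ = ent T n k := (ent_eq T ⟨n, h.1⟩ ⟨k, h.2⟩).symm
    split_ifs <;> simp [hTnk]
  · conv_lhs => rw [ent, dif_neg h]
    have hent : ent T n k = 0 := by rw [ent, dif_neg h]
    split_ifs with hkj e1 e2
    · exact absurd h (by omega)
    · exact absurd h (by omega)
    · exact hent.symm
    · exact hent.symm

lemma ent_swapT_ge {m : ℕ} (T : Tab m) (n1 n2 j : ℕ) (h1 : n1 < m) (h2 : n2 < m)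
    (hj1 : j ≤ n1) (hj2 : j ≤ n2) (n k : ℕ) (hk : j ≤ k) :
    ent (swapT T n1 n2 j) n k = ent T n k := by
  rw [ent_swapT T n1 n2 j h1 h2 hj1 hj2, if_neg (by omega)]

lemma swapT_mem {m : ℕ} {T : Tab m} (hT : T ∈ tabFinset m) {n1 n2 j : ℕ} (h1 : n1 < m)
    (h2 : n2 < m) (hj1 : j ≤ n1) (hj2 : j ≤ n2) (hcol : ent T n1 j = ent T n2 j) :
    swapT T n1 n2 j ∈ tabFinset m := by
  rw [tabFinset, Fintype.mem_piFinset]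
  intro i
  rw [rowFinset, Finset.mem_filter]
  constructor
  · rw [Fintype.mem_piFinset]
    intro u
    rw [← ent_eq (swapT T n1 n2 j) i u, ent_swapT T n1 n2 j h1 h2 hj1 hj2]
    split_ifs with hkj e1 e2
    · exact ent_mem_Icc hT h2 (by omega)
    · exact ent_mem_Icc hT h1 (by omega)
    · exact ent_mem_Icc hT i.2 u.2
    · exact ent_mem_Icc hT i.2 u.2
  · intro u v huv
    obtain ⟨k, hk⟩ := u
    obtain ⟨l, hl⟩ := v
    have hkl : k ≤ l := huv
    have eu : swapT T n1 n2 j i ⟨k, hk⟩ = ent (swapT T n1 n2 j) i.1 k :=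
      (ent_eq _ i ⟨k, hk⟩).symm
    have ev : swapT T n1 n2 j i ⟨l, hl⟩ = ent (swapT T n1 n2 j) i.1 l :=
      (ent_eq _ i ⟨l, hl⟩).symm
    rw [eu, ev, ent_swapT T n1 n2 j h1 h2 hj1 hj2, ent_swapT T n1 n2 j h1 h2 hj1 hj2]
    by_cases hvj : l < j
    · rw [if_pos hvj, if_pos (show k < j by omega)]
      split_ifs with e1 e2
      · exact row_mono hT h2 hkl (by omega)
      · exact row_mono hT h1 hkl (by omega)
      · exact row_mono hT i.2 hkl hl
    · rw [if_neg hvj]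
      by_cases huj : k < j
      · rw [if_pos huj]
        split_ifs with e1 e2
        · rw [e1]
          calc ent T n1 l ≤ ent T n1 j := row_mono hT h1 (by omega) (by omega)
            _ = ent T n2 j := hcol
            _ ≤ ent T n2 k := row_mono hT h2 (by omega) (by omega)
        · rw [e2]
          calc ent T n2 l ≤ ent T n2 j := row_mono hT h2 (by omega) (by omega)
            _ = ent T n1 j := hcol.symm
            _ ≤ ent T n1 k := row_mono hT h1 (by omega) (by omega)
        · exact row_mono hT i.2 hkl hl
      · rw [if_neg huj]
        exact row_mono hT i.2 hkl hl

lemma swapT_swapT {m : ℕ} (T : Tab m) {n1 n2 j : ℕ} (h1 : n1 < m) (h2 : n2 < m)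
    (hj1 : j ≤ n1) (hj2 : j ≤ n2) (hne : n1 ≠ n2) :
    swapT (swapT T n1 n2 j) n1 n2 j = T := by
  funext i u
  rw [← ent_eq (swapT (swapT T n1 n2 j) n1 n2 j) i u, ← ent_eq T i u,
    ent_swapT (swapT T n1 n2 j) n1 n2 j h1 h2 hj1 hj2]
  by_cases hu : u.1 < j
  · rw [if_pos hu]
    by_cases e1 : i.1 = n1
    · rw [if_pos e1, ent_swapT T n1 n2 j h1 h2 hj1 hj2, if_pos hu, if_neg (Ne.symm hne),
        if_pos rfl]
      exact (congrArg (fun t => ent T t u.1) e1).symm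
    · rw [if_neg e1]
      by_cases e2 : i.1 = n2
      · rw [if_pos e2, ent_swapT T n1 n2 j h1 h2 hj1 hj2, if_pos hu, if_pos rfl]
        exact (congrArg (fun t => ent T t u.1) e2).symm
      · rw [if_neg e2, ent_swapT T n1 n2 j h1 h2 hj1 hj2, if_pos hu, if_neg e1, if_neg e2]
  · rw [if_neg hu, ent_swapT T n1 n2 j h1 h2 hj1 hj2, if_neg hu]

lemma firsts_swapT {m : ℕ} (T : Tab m) {n1 n2 j : ℕ} (h1 : n1 < m) (h2 : n2 < m)
    (hj : 1 ≤ j) :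
    firsts (swapT T n1 n2 j) = firsts T ∘ Equiv.swap ⟨n1, h1⟩ ⟨n2, h2⟩ := by
  funext i
  show swapT T n1 n2 j i ⟨0, Nat.succ_pos _⟩ = firsts T (Equiv.swap ⟨n1, h1⟩ ⟨n2, h2⟩ i)
  rw [swapT]
  simp only [if_pos (by omega : (0:ℕ) < j)]
  rw [Equiv.swap_apply_def]
  by_cases e1 : i = ⟨n1, h1⟩
  · rw [if_pos e1, if_pos (by rw [e1])]
    show ent T n2 0 = T ⟨n2, h2⟩ ⟨0, Nat.succ_pos _⟩
    exact ent_eq T ⟨n2, h2⟩ ⟨0, Nat.succ_pos _⟩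
  · rw [if_neg e1, if_neg (fun hh : i.1 = n1 => e1 (Fin.ext hh))]
    by_cases e2 : i = ⟨n2, h2⟩
    · rw [if_pos e2, if_pos (by rw [e2])]
      exact ent_eq T ⟨n1, h1⟩ ⟨0, Nat.succ_pos _⟩
    · rw [if_neg e2, if_neg (fun hh : i.1 = n2 => e2 (Fin.ext hh))]
      rfl

/-! ### Weights via total entries -/

/-- Row weight as a product over `range (n+1)` using total entries. -/
def wtN {R : Type*} [CommRing R] (a b : ℕ → R) {m : ℕ} (T : Tab m) (n : ℕ) : R :=
  ∏ k ∈ Finset.range (n + 1),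
    if 1 ≤ k ∧ ent T n k = ent T n (k - 1) then a (ent T n k) + b k else 1

lemma wt_eq_wtN {R : Type*} [CommRing R] (a b : ℕ → R) {m : ℕ} (T : Tab m) (i : Fin m) :
    wt a b (T i) = wtN a b T i.1 := by
  simp only [wt, crit, wtN]
  rw [Finset.prod_filter]
  rw [← Fin.prod_univ_eq_prod_range
    (fun k => if 1 ≤ k ∧ ent T i.1 k = ent T i.1 (k - 1) then a (ent T i.1 k) + b k else 1)
    (i.1 + 1)]
  apply Finset.prod_congr rfl
  intro u _
  have key : ent T i.1 u.1 = T i u := ent_eq T i u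
  have key2 : ent T i.1 (u.1 - 1)
      = T i ⟨u.1 - 1, Nat.lt_of_le_of_lt (Nat.sub_le u.1 1) u.2⟩ :=
    ent_eq T i ⟨u.1 - 1, Nat.lt_of_le_of_lt (Nat.sub_le u.1 1) u.2⟩
  rw [← key2, ← key]

lemma wtN_swap_pair {R : Type*} [CommRing R] (a b : ℕ → R) {m : ℕ} {T : Tab m} {n1 n2 j : ℕ}
    (h1 : n1 < m) (h2 : n2 < m) (hj1 : j ≤ n1) (hj2 : j ≤ n2) (hne : n1 ≠ n2)
    (hcol : ent T n1 j = ent T n2 j) :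
    wtN a b (swapT T n1 n2 j) n1 * wtN a b (swapT T n1 n2 j) n2
      = wtN a b T n1 * wtN a b T n2 := by
  have key : ∀ k ≤ j, ent (swapT T n1 n2 j) n1 k = ent T n2 k
      ∧ ent (swapT T n1 n2 j) n2 k = ent T n1 k := by
    intro k hk
    rw [ent_swapT T n1 n2 j h1 h2 hj1 hj2, ent_swapT T n1 n2 j h1 h2 hj1 hj2]
    by_cases hkj : k < j
    · rw [if_pos hkj, if_pos hkj, if_pos rfl, if_neg (Ne.symm hne), if_pos rfl]
      exact ⟨rfl, rfl⟩
    · have hkje : k = j := by omega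
      subst hkje
      rw [if_neg (lt_irrefl k), if_neg (lt_irrefl k)]
      exact ⟨hcol, hcol.symm⟩
  have key2 : ∀ k, j ≤ k → ent (swapT T n1 n2 j) n1 k = ent T n1 k
      ∧ ent (swapT T n1 n2 j) n2 k = ent T n2 k := by
    intro k hk
    rw [ent_swapT T n1 n2 j h1 h2 hj1 hj2, ent_swapT T n1 n2 j h1 h2 hj1 hj2,
      if_neg (by omega), if_neg (by omega)]
    exact ⟨rfl, rfl⟩
  simp only [wtN]
  rw [← Finset.prod_range_mul_prod_Ico _ (show j + 1 ≤ n1 + 1 by omega),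
    ← Finset.prod_range_mul_prod_Ico _ (show j + 1 ≤ n1 + 1 by omega),
    ← Finset.prod_range_mul_prod_Ico _ (show j + 1 ≤ n2 + 1 by omega),
    ← Finset.prod_range_mul_prod_Ico _ (show j + 1 ≤ n2 + 1 by omega)]
  have e1 : ∏ k ∈ Finset.range (j + 1),
      (if 1 ≤ k ∧ ent (swapT T n1 n2 j) n1 k = ent (swapT T n1 n2 j) n1 (k - 1)
        then a (ent (swapT T n1 n2 j) n1 k) + b k else 1)
      = ∏ k ∈ Finset.range (j + 1),
      (if 1 ≤ k ∧ ent T n2 k = ent T n2 (k - 1) then a (ent T n2 k) + b k else 1) := by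
    apply Finset.prod_congr rfl
    intro k hk
    have hk' : k ≤ j := by simpa using Nat.lt_succ_iff.mp (Finset.mem_range.mp hk)
    rw [(key k hk').1, (key (k - 1) (by omega)).1]
  have e2 : ∏ k ∈ Finset.range (j + 1),
      (if 1 ≤ k ∧ ent (swapT T n1 n2 j) n2 k = ent (swapT T n1 n2 j) n2 (k - 1)
        then a (ent (swapT T n1 n2 j) n2 k) + b k else 1)
      = ∏ k ∈ Finset.range (j + 1),
      (if 1 ≤ k ∧ ent T n1 k = ent T n1 (k - 1) then a (ent T n1 k) + b k else 1) := by
    apply Finset.prod_congr rfl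
    intro k hk
    have hk' : k ≤ j := by simpa using Nat.lt_succ_iff.mp (Finset.mem_range.mp hk)
    rw [(key k hk').2, (key (k - 1) (by omega)).2]
  have e3 : ∏ k ∈ Finset.Ico (j + 1) (n1 + 1),
      (if 1 ≤ k ∧ ent (swapT T n1 n2 j) n1 k = ent (swapT T n1 n2 j) n1 (k - 1)
        then a (ent (swapT T n1 n2 j) n1 k) + b k else 1)
      = ∏ k ∈ Finset.Ico (j + 1) (n1 + 1),
      (if 1 ≤ k ∧ ent T n1 k = ent T n1 (k - 1) then a (ent T n1 k) + b k else 1) := by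
    apply Finset.prod_congr rfl
    intro k hk
    have hk' : j + 1 ≤ k := (Finset.mem_Ico.mp hk).1
    rw [(key2 k (by omega)).1, (key2 (k - 1) (by omega)).1]
  have e4 : ∏ k ∈ Finset.Ico (j + 1) (n2 + 1),
      (if 1 ≤ k ∧ ent (swapT T n1 n2 j) n2 k = ent (swapT T n1 n2 j) n2 (k - 1)
        then a (ent (swapT T n1 n2 j) n2 k) + b k else 1)
      = ∏ k ∈ Finset.Ico (j + 1) (n2 + 1),
      (if 1 ≤ k ∧ ent T n2 k = ent T n2 (k - 1) then a (ent T n2 k) + b k else 1) := by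
    apply Finset.prod_congr rfl
    intro k hk
    have hk' : j + 1 ≤ k := (Finset.mem_Ico.mp hk).1
    rw [(key2 k (by omega)).2, (key2 (k - 1) (by omega)).2]
  rw [e1, e2, e3, e4]
  ring

lemma prod_wt_swap {R : Type*} [CommRing R] (a b : ℕ → R) {m : ℕ} {T : Tab m} {n1 n2 j : ℕ}
    (hT : T ∈ tabFinset m) (h1 : n1 < m) (h2 : n2 < m) (hj1 : j ≤ n1) (hj2 : j ≤ n2)
    (hne : n1 ≠ n2) (hcol : ent T n1 j = ent T n2 j) :
    ∏ i : Fin m, wt a b (swapT T n1 n2 j i) = ∏ i : Fin m, wt a b (T i) := by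
  rw [Finset.prod_congr rfl (fun i (_ : i ∈ univ) => wt_eq_wtN a b (swapT T n1 n2 j) i),
    Finset.prod_congr rfl (fun i (_ : i ∈ univ) => wt_eq_wtN a b T i)]
  have hxy : (⟨n2, h2⟩ : Fin m) ≠ ⟨n1, h1⟩ := fun h => hne (congrArg Fin.val h).symm
  rw [← Finset.mul_prod_erase univ _ (Finset.mem_univ (⟨n1, h1⟩ : Fin m)),
    ← Finset.mul_prod_erase (univ.erase ⟨n1, h1⟩) _
      (Finset.mem_erase.mpr ⟨hxy, Finset.mem_univ (⟨n2, h2⟩ : Fin m)⟩),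
    ← Finset.mul_prod_erase univ (fun i => wtN a b T i.1) (Finset.mem_univ (⟨n1, h1⟩ : Fin m)),
    ← Finset.mul_prod_erase (univ.erase ⟨n1, h1⟩) (fun i => wtN a b T i.1)
      (Finset.mem_erase.mpr ⟨hxy, Finset.mem_univ (⟨n2, h2⟩ : Fin m)⟩)]
  have hrest : ∏ i ∈ (univ.erase (⟨n1, h1⟩ : Fin m)).erase ⟨n2, h2⟩,
      wtN a b (swapT T n1 n2 j) i.1
      = ∏ i ∈ (univ.erase (⟨n1, h1⟩ : Fin m)).erase ⟨n2, h2⟩, wtN a b T i.1 := by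
    apply Finset.prod_congr rfl
    intro i hi
    have hi2 : i.1 ≠ n2 := fun h => (Finset.mem_erase.mp hi).1 (Fin.ext h)
    have hi1 : i.1 ≠ n1 :=
      fun h => (Finset.mem_erase.mp (Finset.mem_erase.mp hi).2).1 (Fin.ext h)
    have hent : ∀ k, ent (swapT T n1 n2 j) i.1 k = ent T i.1 k := by
      intro k
      rw [ent_swapT T n1 n2 j h1 h2 hj1 hj2]
      split_ifs <;>
        first
          | rfl
          | exact absurd ‹i.1 = n1› hi1
          | exact absurd ‹i.1 = n2› hi2
    simp only [wtN, hent]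
  rw [hrest, ← mul_assoc, ← mul_assoc]
  congr 1
  exact wtN_swap_pair a b h1 h2 hj1 hj2 hne hcol

/-! ### Canonical choice of crossing data -/

/-- Columns witnessing an intersection. -/
def BadJ {m : ℕ} (T : Tab m) : Set ℕ :=
  {j | ∃ p q : ℕ, p < m ∧ q < m ∧ p ≠ q ∧ j ≤ p ∧ j ≤ q ∧ ent T p j = ent T q j}

/-- First bad column. -/
def fb {m : ℕ} (T : Tab m) : ℕ := sInf (BadJ T)

/-- Rows involved in a crossing at the first bad column. -/
def Srow1 {m : ℕ} (T : Tab m) : Set ℕ :=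
  {p | p < m ∧ fb T ≤ p ∧ ∃ q, q < m ∧ q ≠ p ∧ fb T ≤ q ∧ ent T q (fb T) = ent T p (fb T)}

/-- First crossing row. -/
def rr1 {m : ℕ} (T : Tab m) : ℕ := sInf (Srow1 T)

/-- Partners of the first crossing row. -/
def Srow2 {m : ℕ} (T : Tab m) : Set ℕ :=
  {q | q < m ∧ q ≠ rr1 T ∧ fb T ≤ q ∧ ent T q (fb T) = ent T (rr1 T) (fb T)}

/-- Second crossing row. -/
def rr2 {m : ℕ} (T : Tab m) : ℕ := sInf (Srow2 T)

/-- The Gessel–Viennot involution. -/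
def gT {m : ℕ} (T : Tab m) : Tab m := swapT T (rr1 T) (rr2 T) (fb T)

lemma badJ_nonempty_of_not_nonInt {m : ℕ} {T : Tab m} (h : ¬ NonInt T) :
    (BadJ T).Nonempty := by
  rw [NonInt] at h
  push_neg at h
  obtain ⟨i, i', j, hj, hj', heq, hne⟩ := h
  have e1 := ent_eq T i ⟨j, Nat.lt_succ_of_le hj⟩
  have e2 := ent_eq T i' ⟨j, Nat.lt_succ_of_le hj'⟩
  exact ⟨j, i.1, i'.1, i.2, i'.2, fun hh => hne (Fin.ext hh), hj, hj',
    by rw [e1, e2]; exact heq⟩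

lemma not_nonInt_of_badJ {m : ℕ} {T : Tab m} {j : ℕ} (h : j ∈ BadJ T) : ¬ NonInt T := by
  obtain ⟨p, q, hp, hq, hpq, hjp, hjq, he⟩ := h
  intro hN
  apply hpq
  have e1 := ent_eq T ⟨p, hp⟩ ⟨j, Nat.lt_succ_of_le hjp⟩
  have e2 := ent_eq T ⟨q, hq⟩ ⟨j, Nat.lt_succ_of_le hjq⟩
  have heq : T ⟨p, hp⟩ ⟨j, Nat.lt_succ_of_le hjp⟩ = T ⟨q, hq⟩ ⟨j, Nat.lt_succ_of_le hjq⟩ := by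
    rw [← e1, ← e2]; exact he
  exact congrArg Fin.val (hN ⟨p, hp⟩ ⟨q, hq⟩ j hjp hjq heq)

lemma zero_not_badJ {m : ℕ} {T : Tab m} (hInj : Function.Injective (firsts T)) :
    0 ∉ BadJ T := by
  rintro ⟨p, q, hp, hq, hpq, -, -, he⟩
  apply hpq
  have e1 := ent_eq T ⟨p, hp⟩ ⟨0, Nat.succ_pos _⟩
  have e2 := ent_eq T ⟨q, hq⟩ ⟨0, Nat.succ_pos _⟩
  have : firsts T ⟨p, hp⟩ = firsts T ⟨q, hq⟩ := by
    show T ⟨p, hp⟩ ⟨0, Nat.succ_pos _⟩ = T ⟨q, hq⟩ ⟨0, Nat.succ_pos _⟩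
    rw [← e1, ← e2]; exact he
  exact congrArg Fin.val (hInj this)

lemma main_facts {m : ℕ} {T : Tab m} (hInj : Function.Injective (firsts T))
    (hNI : ¬ NonInt T) :
    rr1 T < m ∧ rr2 T < m ∧ fb T ≤ rr1 T ∧ fb T ≤ rr2 T ∧ rr2 T ≠ rr1 T ∧ 1 ≤ fb T ∧
      ent T (rr1 T) (fb T) = ent T (rr2 T) (fb T) := by
  have hBne : (BadJ T).Nonempty := badJ_nonempty_of_not_nonInt hNI
  have hfb : fb T ∈ BadJ T := Nat.sInf_mem hBne
  obtain ⟨p, q, hp, hq, hpq, hjp, hjq, he⟩ := hfb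
  have hS1ne : (Srow1 T).Nonempty := ⟨p, hp, hjp, q, hq, Ne.symm hpq, hjq, he.symm⟩
  have hr1 : rr1 T ∈ Srow1 T := Nat.sInf_mem hS1ne
  obtain ⟨hr1m, hr1j, q', hq'm, hq'ne, hq'j, hq'e⟩ := hr1
  have hS2ne : (Srow2 T).Nonempty := ⟨q', hq'm, hq'ne, hq'j, hq'e⟩
  have hr2 : rr2 T ∈ Srow2 T := Nat.sInf_mem hS2ne
  obtain ⟨hr2m, hr2ne, hr2j, hr2e⟩ := hr2
  have hfbpos : 1 ≤ fb T := by
    rcases Nat.eq_zero_or_pos (fb T) with h0 | h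
    · exact absurd (h0 ▸ Nat.sInf_mem hBne) (zero_not_badJ hInj)
    · exact h
  exact ⟨hr1m, hr2m, hr1j, hr2j, hr2ne, hfbpos, hr2e.symm⟩

lemma badJ_swapT_lt {m : ℕ} {T : Tab m} {n1 n2 j : ℕ} (h1 : n1 < m) (h2 : n2 < m)
    (hj1 : j ≤ n1) (hj2 : j ≤ n2) (hne : n1 ≠ n2) {j' : ℕ} (hj' : j' < j) :
    j' ∈ BadJ (swapT T n1 n2 j) ↔ j' ∈ BadJ T := by
  set π : ℕ → ℕ := fun n => if n = n1 then n2 else if n = n2 then n1 else n with hπ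
  have hππ : ∀ n, π (π n) = n := by
    intro n
    by_cases ha : n = n1
    · simp [hπ, ha, Ne.symm hne]
    · by_cases hb : n = n2 <;> simp [hπ, ha, hb]
  have hπm : ∀ n, n < m → π n < m := by
    intro n hn
    simp only [hπ]
    split_ifs
    · exact h2
    · exact h1
    · exact hn
  have hπge : ∀ n, j' ≤ n → j' ≤ π n := by
    intro n hn
    simp only [hπ]
    split_ifs <;> omega
  have hent : ∀ n, ent (swapT T n1 n2 j) n j' = ent T (π n) j' := by
    intro n
    rw [ent_swapT T n1 n2 j h1 h2 hj1 hj2, if_pos hj']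
    simp only [hπ]
    split_ifs <;> rfl
  have hπinj : ∀ p q, π p = π q → p = q := fun p q h => by rw [← hππ p, h, hππ]
  constructor
  · rintro ⟨p, q, hp, hq, hpq, hjp, hjq, he⟩
    exact ⟨π p, π q, hπm p hp, hπm q hq, fun h => hpq (hπinj _ _ h), hπge p hjp, hπge q hjq,
      by rw [← hent p, ← hent q]; exact he⟩
  · rintro ⟨p, q, hp, hq, hpq, hjp, hjq, he⟩
    refine ⟨π p, π q, hπm p hp, hπm q hq, fun h => hpq (hπinj _ _ h), hπge p hjp, hπge q hjq, ?_⟩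
    rw [hent (π p), hent (π q), hππ, hππ]
    exact he

lemma badJ_fb_gT {m : ℕ} {T : Tab m} (hInj : Function.Injective (firsts T))
    (hNI : ¬ NonInt T) : fb T ∈ BadJ (gT T) := by
  obtain ⟨h1, h2, hj1, hj2, hne, hjpos, hcol⟩ := main_facts hInj hNI
  have hfb : fb T ∈ BadJ T := Nat.sInf_mem (badJ_nonempty_of_not_nonInt hNI)
  obtain ⟨p, q, hp, hq, hpq, hjp, hjq, he⟩ := hfb
  refine ⟨p, q, hp, hq, hpq, hjp, hjq, ?_⟩
  show ent (swapT T (rr1 T) (rr2 T) (fb T)) p (fb T)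
      = ent (swapT T (rr1 T) (rr2 T) (fb T)) q (fb T)
  rw [ent_swapT_ge T _ _ _ h1 h2 hj1 hj2 _ _ le_rfl,
    ent_swapT_ge T _ _ _ h1 h2 hj1 hj2 _ _ le_rfl]
  exact he

lemma fb_gT {m : ℕ} {T : Tab m} (hInj : Function.Injective (firsts T))
    (hNI : ¬ NonInt T) : fb (gT T) = fb T := by
  obtain ⟨h1, h2, hj1, hj2, hne, hjpos, hcol⟩ := main_facts hInj hNI
  have hmem' : fb T ∈ BadJ (gT T) := badJ_fb_gT hInj hNI
  apply le_antisymm (Nat.sInf_le hmem')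
  by_contra hlt
  push_neg at hlt
  have hmem2 : fb (gT T) ∈ BadJ (gT T) := Nat.sInf_mem ⟨fb T, hmem'⟩
  have : fb (gT T) ∈ BadJ T :=
    (badJ_swapT_lt h1 h2 hj1 hj2 (Ne.symm hne) hlt).mp hmem2
  exact Nat.notMem_of_lt_sInf hlt this

lemma ent_gT_col {m : ℕ} {T : Tab m} (hInj : Function.Injective (firsts T))
    (hNI : ¬ NonInt T) : ∀ x, ent (gT T) x (fb T) = ent T x (fb T) := by
  obtain ⟨h1, h2, hj1, hj2, hne, hjpos, hcol⟩ := main_facts hInj hNI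
  intro x
  exact ent_swapT_ge T _ _ _ h1 h2 hj1 hj2 _ _ le_rfl

lemma Srow1_gT {m : ℕ} {T : Tab m} (hInj : Function.Injective (firsts T))
    (hNI : ¬ NonInt T) : Srow1 (gT T) = Srow1 T := by
  ext n
  simp only [Srow1, fb_gT hInj hNI, ent_gT_col hInj hNI, Set.mem_setOf_eq]

lemma rr1_gT {m : ℕ} {T : Tab m} (hInj : Function.Injective (firsts T))
    (hNI : ¬ NonInt T) : rr1 (gT T) = rr1 T :=
  congrArg sInf (Srow1_gT hInj hNI)

lemma Srow2_gT {m : ℕ} {T : Tab m} (hInj : Function.Injective (firsts T))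
    (hNI : ¬ NonInt T) : Srow2 (gT T) = Srow2 T := by
  ext n
  simp only [Srow2, fb_gT hInj hNI, rr1_gT hInj hNI, ent_gT_col hInj hNI, Set.mem_setOf_eq]

lemma rr2_gT {m : ℕ} {T : Tab m} (hInj : Function.Injective (firsts T))
    (hNI : ¬ NonInt T) : rr2 (gT T) = rr2 T :=
  congrArg sInf (Srow2_gT hInj hNI)

lemma gT_gT {m : ℕ} {T : Tab m} (hInj : Function.Injective (firsts T))
    (hNI : ¬ NonInt T) : gT (gT T) = T := by
  obtain ⟨h1, h2, hj1, hj2, hne, hjpos, hcol⟩ := main_facts hInj hNI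
  have e : gT (gT T) = swapT (gT T) (rr1 (gT T)) (rr2 (gT T)) (fb (gT T)) := rfl
  rw [e, fb_gT hInj hNI, rr1_gT hInj hNI, rr2_gT hInj hNI]
  exact swapT_swapT T h1 h2 hj1 hj2 (Ne.symm hne)

/-- Gessel–Viennot cancellation: the signed weighted sum over all triangular
tableaux whose first parts form a permutation equals the same sum restricted to
non-intersecting tableaux. -/
theorem statement9 {R : Type*} [CommRing R] (m : ℕ) (a b : ℕ → R) :
    ∑ T ∈ (tabFinset m).filter (fun T => Function.Injective (firsts T)),
        sgn (firsts T) • ∏ i : Fin m, wt a b (T i) =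
      ∑ T ∈ (tabFinset m).filter NonInt,
        sgn (firsts T) • ∏ i : Fin m, wt a b (T i) := by
  classical
  have hsub : (tabFinset m).filter NonInt
      ⊆ (tabFinset m).filter (fun T => Function.Injective (firsts T)) := by
    intro T hT
    rw [Finset.mem_filter] at hT ⊢
    exact ⟨hT.1, fun i i' h => hT.2 i i' 0 (Nat.zero_le _) (Nat.zero_le _) h⟩
  rw [← Finset.sum_sdiff hsub]
  have hzero : ∑ T ∈ (tabFinset m).filter (fun T => Function.Injective (firsts T))
      \ (tabFinset m).filter NonInt, sgn (firsts T) • ∏ i : Fin m, wt a b (T i) = 0 := by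
    apply Finset.sum_involution (fun T _ => gT T)
    · -- cancellation
      intro T hT
      rw [Finset.mem_sdiff, Finset.mem_filter, Finset.mem_filter] at hT
      obtain ⟨⟨htab, hInj⟩, hnot⟩ := hT
      have hNI : ¬ NonInt T := fun h => hnot ⟨htab, h⟩
      obtain ⟨h1, h2, hj1, hj2, hne, hjpos, hcol⟩ := main_facts hInj hNI
      have hprod : ∏ i : Fin m, wt a b (gT T i) = ∏ i : Fin m, wt a b (T i) :=
        prod_wt_swap a b htab h1 h2 hj1 hj2 (Ne.symm hne) hcol
      have hf : firsts (gT T)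
          = firsts T ∘ Equiv.swap ⟨rr1 T, h1⟩ ⟨rr2 T, h2⟩ :=
        firsts_swapT T h1 h2 hjpos
      have hsgn : sgn (firsts (gT T)) = - sgn (firsts T) := by
        rw [hf]
        exact sgn_comp_swap _ hInj (fun hh => hne (congrArg Fin.val hh).symm)
      rw [hsgn, hprod, neg_smul]
      exact add_neg_cancel _
    · -- no fixed points
      intro T hT _
      rw [Finset.mem_sdiff, Finset.mem_filter, Finset.mem_filter] at hT
      obtain ⟨⟨htab, hInj⟩, hnot⟩ := hT
      have hNI : ¬ NonInt T := fun h => hnot ⟨htab, h⟩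
      obtain ⟨h1, h2, hj1, hj2, hne, hjpos, hcol⟩ := main_facts hInj hNI
      intro hgg
      apply hne
      have hf : firsts (gT T)
          = firsts T ∘ Equiv.swap ⟨rr1 T, h1⟩ ⟨rr2 T, h2⟩ :=
        firsts_swapT T h1 h2 hjpos
      have hxy : firsts T ⟨rr2 T, h2⟩ = firsts T ⟨rr1 T, h1⟩ := by
        calc firsts T ⟨rr2 T, h2⟩
            = (firsts T ∘ Equiv.swap ⟨rr1 T, h1⟩ ⟨rr2 T, h2⟩) ⟨rr1 T, h1⟩ := by
              simp [Equiv.swap_apply_left]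
          _ = firsts (gT T) ⟨rr1 T, h1⟩ := by rw [hf]
          _ = firsts T ⟨rr1 T, h1⟩ := by rw [hgg]
      exact congrArg Fin.val (hInj hxy)
    · -- maps into the set
      intro T hT
      rw [Finset.mem_sdiff, Finset.mem_filter, Finset.mem_filter] at hT
      obtain ⟨⟨htab, hInj⟩, hnot⟩ := hT
      have hNI : ¬ NonInt T := fun h => hnot ⟨htab, h⟩
      obtain ⟨h1, h2, hj1, hj2, hne, hjpos, hcol⟩ := main_facts hInj hNI
      rw [Finset.mem_sdiff, Finset.mem_filter, Finset.mem_filter]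
      have htab' : gT T ∈ tabFinset m :=
        swapT_mem htab h1 h2 hj1 hj2 hcol
      have hf : firsts (gT T)
          = firsts T ∘ Equiv.swap ⟨rr1 T, h1⟩ ⟨rr2 T, h2⟩ :=
        firsts_swapT T h1 h2 hjpos
      have hInj' : Function.Injective (firsts (gT T)) := by
        rw [hf]
        exact hInj.comp (Equiv.swap _ _).injective
      refine ⟨⟨htab', hInj'⟩, fun hc => ?_⟩
      exact not_nonInt_of_badJ (badJ_fb_gT hInj hNI) hc.2
    · -- involution
      intro T hT
      rw [Finset.mem_sdiff, Finset.mem_filter, Finset.mem_filter] at hT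
      obtain ⟨⟨htab, hInj⟩, hnot⟩ := hT
      have hNI : ¬ NonInt T := fun h => hnot ⟨htab, h⟩
      exact gT_gT hInj hNI
  rw [hzero, zero_add]

end
end

section
/- For k ≥ 1 and a partition λ of length i with first part j containing each of j−1,...,j−k+1 as a part (so λ ∈ the (k)-indexed set with k+1 levels), the total signed weight of all arrow-extensions of λ ∈ P_j^i[k+1] equals w(λ)·(a_j − a_{j-k-1}): there are exactly k+1 left extensions and k+1 right extensions, contributing w(λ)·Σ_{r=0}^{k}[(a_{j-r} + b_{u_r}) − (a_{j-r-1} + b_{u_r})] = w(λ)(a_j − a_{j-k-1}), where u_0,...,u_k are the positions of the descents from j−r to j−r−1 within λ. -/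
open Finset

attribute [local instance] Classical.propDecidable

noncomputable section

/-- For a partition `λ ∈ PartSet j i (k+1)`, there are exactly `k+1` positions `u`
with `λ_u > λ_{u+1} = λ_u − 1 ≥ j−k−1` (the possible arrow positions), and the total
signed weight of the `2(k+1)` arrow-extensions of `λ` equals `w(λ)(a_j − a_{j-k-1})`:
a left extension at `u` contributes `w(λ)(a_{λ_u} + b_u)` and a right extension
contributes `−w(λ)(a_{λ_{u+1}} + b_u)` (paper's 1-indexed `u`; here positions are
0-indexed so the `b`-index is `u+1`). -/
theorem statement15 {R : Type*} [CommRing R] (a b : ℕ → R) (j i k : ℕ)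
    (hj : k + 1 < j) (lam : Fin i → ℕ) (hlam : lam ∈ PartSet j i (k + 1)) :
    (univ.filter fun u : Fin i => ∃ h : u.1 + 1 < i,
        lam ⟨u.1 + 1, h⟩ + 1 = lam u ∧ j - k - 1 ≤ lam ⟨u.1 + 1, h⟩).card = k + 1 ∧
    ∑ u ∈ univ.filter fun u : Fin i => ∃ h : u.1 + 1 < i,
          lam ⟨u.1 + 1, h⟩ + 1 = lam u ∧ j - k - 1 ≤ lam ⟨u.1 + 1, h⟩,
        (wt a b lam * (a (lam u) + b (u.1 + 1)) -
          wt a b lam * (a (lam u - 1) + b (u.1 + 1))) =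
      wt a b lam * (a j - a (j - k - 1)) := by
  classical
  simp only [PartSet, Finset.mem_filter] at hlam
  obtain ⟨hpi, hmono, ⟨hi0, h0⟩, hall⟩ := hlam
  rw [Fintype.mem_piFinset] at hpi
  have hbd : ∀ u : Fin i, 1 ≤ lam u ∧ lam u ≤ j := fun u => by
    have := hpi u; rw [Finset.mem_Icc] at this; exact this
  have hub : ∀ u : Fin i, lam u ≤ j := fun u => by
    have := hmono ⟨0, hi0⟩ u (Fin.le_def.mpr (Nat.zero_le _)); omega
  -- existence: for each r ≤ k there is a descent position with value j - r
  have hex : ∀ r, r ≤ k → ∃ u : Fin i,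
      ((∃ h : u.1 + 1 < i, lam ⟨u.1 + 1, h⟩ + 1 = lam u ∧ j - k - 1 ≤ lam ⟨u.1 + 1, h⟩)
        ∧ lam u = j - r) := by
    intro r hr
    have hjr : r + 1 < j := by omega
    have hS : ∃ u : Fin i, lam u = j - r := by
      rcases Nat.eq_zero_or_pos r with h | h
      · exact ⟨⟨0, hi0⟩, by simp [h, h0]⟩
      · exact hall r h (by omega)
    obtain ⟨v, hv⟩ := hall (r + 1) (by omega) (by omega)
    set S : Finset (Fin i) := univ.filter fun u => lam u = j - r with hSdef
    have hSne : S.Nonempty := ⟨hS.choose, by simp [hSdef, hS.choose_spec]⟩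
    set u := S.max' hSne with hu
    have huS : lam u = j - r := by
      have := S.max'_mem hSne; simp only [hSdef, Finset.mem_filter] at this
      exact this.2
    have huv : u.1 < v.1 := by
      by_contra hle
      push_neg at hle
      have := hmono v u (Fin.le_def.mpr hle)
      omega
    have h1 : u.1 + 1 < i := lt_of_le_of_lt huv v.2
    set u' : Fin i := ⟨u.1 + 1, h1⟩ with hu'
    have hne : lam u' ≠ j - r := by
      intro hEq
      have h2 := S.le_max' u' (by simp [hSdef, hEq])
      rw [Fin.le_def] at h2
      simp only [hu'] at h2
      omega
    have hle1 : lam u' ≤ lam u := hmono u u' (Fin.le_def.mpr (by simp [hu']))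
    have hle2 : lam v ≤ lam u' := hmono u' v (Fin.le_def.mpr (by simp [hu']; omega))
    have hval : lam u' = j - r - 1 := by omega
    refine ⟨u, ⟨h1, ?_, ?_⟩, huS⟩
    · show lam u' + 1 = lam u; omega
    · show j - k - 1 ≤ lam u'; omega
  -- strict decrease after a descent position
  have hlt : ∀ u u' : Fin i,
      (∃ h : u.1 + 1 < i, lam ⟨u.1 + 1, h⟩ + 1 = lam u ∧ j - k - 1 ≤ lam ⟨u.1 + 1, h⟩) →
      u.1 < u'.1 → lam u' < lam u := by
    intro u u' ⟨h, heq, _⟩ hlt'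
    have h2 : lam u' ≤ lam ⟨u.1 + 1, h⟩ := hmono ⟨u.1 + 1, h⟩ u' (Fin.le_def.mpr (by show u.1 + 1 ≤ u'.1; omega))
    omega
  -- uniqueness of the descent position with a given value
  have huniq : ∀ u u' : Fin i,
      (∃ h : u.1 + 1 < i, lam ⟨u.1 + 1, h⟩ + 1 = lam u ∧ j - k - 1 ≤ lam ⟨u.1 + 1, h⟩) →
      (∃ h : u'.1 + 1 < i, lam ⟨u'.1 + 1, h⟩ + 1 = lam u' ∧ j - k - 1 ≤ lam ⟨u'.1 + 1, h⟩) →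
      lam u = lam u' → u = u' := by
    intro u u' hu hu' hEq
    rcases lt_trichotomy u.1 u'.1 with h | h | h
    · have := hlt u u' hu h; omega
    · exact Fin.ext h
    · have := hlt u' u hu' h; omega
  -- lower bound on the value at a descent position
  have hval : ∀ u : Fin i,
      (∃ h : u.1 + 1 < i, lam ⟨u.1 + 1, h⟩ + 1 = lam u ∧ j - k - 1 ≤ lam ⟨u.1 + 1, h⟩) →
      j - k ≤ lam u ∧ lam u ≤ j := by
    intro u ⟨h, heq, hge⟩
    have := hub u
    omega
  constructor
  · rw [← Finset.card_range (k + 1)]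
    apply Finset.card_bij (fun u _ => j - lam u)
    · intro u hu
      simp only [Finset.mem_filter, Finset.mem_univ, true_and] at hu
      have := hval u hu
      rw [Finset.mem_range]; omega
    · intro u hu u' hu' hEq
      simp only [Finset.mem_filter, Finset.mem_univ, true_and] at hu hu'
      have h1 := hval u hu
      have h2 := hval u' hu'
      exact huniq u u' hu hu' (by omega)
    · intro r hr
      rw [Finset.mem_range] at hr
      obtain ⟨u, hu, hval'⟩ := hex r (by omega)
      refine ⟨u, by simp only [Finset.mem_filter, Finset.mem_univ, true_and]; exact hu, ?_⟩
      omega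
  · rw [show wt a b lam * (a j - a (j - k - 1)) =
        ∑ r ∈ Finset.range (k + 1),
          (wt a b lam * a (j - r) - wt a b lam * a (j - (r + 1))) by
      rw [Finset.sum_range_sub' (fun r => wt a b lam * a (j - r))]
      have : j - (k + 1) = j - k - 1 := by omega
      rw [Nat.sub_zero, this]; ring]
    apply Finset.sum_bij (fun u _ => j - lam u)
    · intro u hu
      simp only [Finset.mem_filter, Finset.mem_univ, true_and] at hu
      have := hval u hu
      rw [Finset.mem_range]; omega
    · intro u hu u' hu' hEq
      simp only [Finset.mem_filter, Finset.mem_univ, true_and] at hu hu'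
      have h1 := hval u hu
      have h2 := hval u' hu'
      exact huniq u u' hu hu' (by omega)
    · intro r hr
      rw [Finset.mem_range] at hr
      obtain ⟨u, hu, hval'⟩ := hex r (by omega)
      refine ⟨u, by simp only [Finset.mem_filter, Finset.mem_univ, true_and]; exact hu, ?_⟩
      omega
    · intro u hu
      simp only [Finset.mem_filter, Finset.mem_univ, true_and] at hu
      have hb := hval u hu
      have h1 : j - (j - lam u) = lam u := by omega
      have h2 : j - (j - lam u + 1) = lam u - 1 := by omega
      rw [h1, h2]
      ring

end
end

section
/- For a superpartition Λ of fermionic degree m and degree n, in N = n − m(m−1)/2 + m variables, every 0-admissible tableau T of shape Λ̃ with evaluation (|T|_1,...,|T|_m,1,...,1), where [|T|_1+1,...,|T|_m+1] is a permutation of {1,...,m}, must have the letter i in cell (i,1) for every i = N−ℓ(Λ^s)+1, ..., N; in particular all these cells are 0-critical. -/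
open Finset

attribute [local instance] Classical.propDecidable

noncomputable section

/-- `T : Fin N → ℕ → ℕ` is a 0-admissible tableau of shape `η` (a composition with
`N` rows, row `i` having cells in columns `1, …, η i`) if:
* every letter is in `{1, …, N}`;
* there are never two identical letters in the same column;
* if cell `(i,j)` is filled with letter `c`, then `c` cannot occur in column `j+1`
  in a row strictly below row `i`;
* in the first column, letter `i` cannot occur strictly below row `i` (i.e. the
  letter in cell `(i,1)` is at least `i`, with 1-indexed rows). -/
def Adm (N : ℕ) (η : Fin N → ℕ) (T : Fin N → ℕ → ℕ) : Prop :=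
  (∀ (i : Fin N) (j : ℕ), 1 ≤ j → j ≤ η i → 1 ≤ T i j ∧ T i j ≤ N) ∧
  (∀ (i i' : Fin N) (j : ℕ), 1 ≤ j → j ≤ η i → j ≤ η i' → T i j = T i' j → i = i') ∧
  (∀ (i i' : Fin N) (j : ℕ), i < i' → 1 ≤ j → j ≤ η i → j + 1 ≤ η i' →
    T i' (j + 1) ≠ T i j) ∧
  (∀ i : Fin N, 1 ≤ η i → i.1 + 1 ≤ T i 1)

/-- `evalT N η T c` is the number of occurrences of the letter `c` in `T`. -/
def evalT (N : ℕ) (η : Fin N → ℕ) (T : Fin N → ℕ → ℕ) (c : ℕ) : ℕ :=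
  ∑ i : Fin N, ((Finset.Icc 1 (η i)).filter fun j => T i j = c).card

/-- For a 0-admissible tableau `T` of shape `Λ̃` (first `m` rows strictly increasing
in length — the fermionic portion — and the remaining rows weakly increasing), in
`N = n − m(m−1)/2 + m` variables, with each letter of `{m+1, …, N}` occurring exactly
once and `[|T|₁+1, …, |T|_m+1]` a permutation of `{1, …, m}`: every row
`i` with `i ≥ N − ℓ(Λˢ) + 1` (1-indexed) is nonempty and holds the letter `i` in its
first cell; in particular all these cells are 0-critical. -/
theorem statement17 (N m : ℕ) (hm : m ≤ N) (η : Fin N → ℕ)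
    (hferm : ∀ i i' : Fin N, i < i' → i'.1 < m → η i < η i')
    (hsym : ∀ i i' : Fin N, i ≤ i' → m ≤ i.1 → η i ≤ η i')
    (hN : N = (∑ i : Fin N, η i) - m * (m - 1) / 2 + m)
    (T : Fin N → ℕ → ℕ) (hT : Adm N η T)
    (hval1 : ∀ c, m + 1 ≤ c → c ≤ N → evalT N η T c = 1)
    (hlt : ∀ i : Fin m, evalT N η T (i.1 + 1) < m)
    (hinj : Function.Injective fun i : Fin m => evalT N η T (i.1 + 1))
    (ℓs : ℕ) (hℓs : ℓs = (univ.filter fun i : Fin N => m ≤ i.1 ∧ 1 ≤ η i).card) :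
    ∀ i : Fin N, N - ℓs ≤ i.1 → 1 ≤ η i ∧ T i 1 = i.1 + 1 := by
  have hηpos : ∀ j : Fin N, N - ℓs ≤ j.1 → 1 ≤ η j := by
    intro j hj
    by_contra h
    push_neg at h
    have hsub : (univ.filter fun i : Fin N => m ≤ i.1 ∧ 1 ≤ η i) ⊆ Finset.Ioi j := by
      intro x hx
      simp only [mem_filter, mem_univ, true_and] at hx
      rw [Finset.mem_Ioi]
      by_contra hle
      push_neg at hle
      have := hsym x j hle hx.1
      omega
    have hcard := Finset.card_le_card hsub
    rw [← hℓs, Fin.card_Ioi] at hcard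
    have hjN := j.isLt
    omega
  have key : ∀ k, ∀ j : Fin N, N - ℓs ≤ j.1 → N - j.1 ≤ k → T j 1 = j.1 + 1 := by
    intro k
    induction k with
    | zero => intro j hj hk; have := j.isLt; omega
    | succ k ih =>
      intro j hj hk
      obtain ⟨hadm1, hadm2, _, hadm4⟩ := hT
      have hη := hηpos j hj
      have h1 := hadm4 j hη
      have h2 := (hadm1 j 1 le_rfl hη).2
      by_contra hne
      have hjN := j.isLt
      have hlt' : T j 1 - 1 < N := by omega
      set j' : Fin N := ⟨T j 1 - 1, hlt'⟩ with hj'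
      have hj'v : j'.1 = T j 1 - 1 := rfl
      have hjj' : j.1 < j'.1 := by omega
      have h3 : T j' 1 = j'.1 + 1 := ih j' (by omega) (by omega)
      have hηj' := hηpos j' (by omega)
      have heq : T j 1 = T j' 1 := by omega
      have := hadm2 j j' 1 le_rfl hη hηj' heq
      rw [this] at hjj'
      omega
  intro i hi
  exact ⟨hηpos i hi, key (N - i.1) i hi le_rfl⟩

end
end

section
/- Let P be a 'good' configuration: a filling of a subset of cells of the fermionic rows of Λ̃ with letters from {1,...,m} such that [|P|_1+1,...,|P|_m+1] is a permutation of {1,...,m}, with letter i occurring in columns 1,...,|P|_i, and arising from a 0-admissible tableau. Then for each letter i, the rows i_1, i_2, ..., i_{|P|_i} containing letter i in columns 1, 2, ..., |P|_i satisfy m ≥ i ≥ i_1 ≥ i_2 ≥ ... ≥ i_{|P|_i}. In particular all cells of P lie in the first m rows. -/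
open Finset

attribute [local instance] Classical.propDecidable

noncomputable section

/-- For a good configuration arising from a 0-admissible tableau `T` of shape `Λ̃`:
if each letter `c ∈ {1, …, m}` occurs exactly in columns `1, …, |T|_c`, then the rows
containing the letter `c` in successive columns weakly decrease, and every cell
holding the letter `c` lies in a row `≤ c` (1-indexed); in particular all cells with
letters `≤ m` lie in the first `m` rows. -/
theorem statement18 (N m : ℕ) (hm : m ≤ N) (η : Fin N → ℕ)
    (hferm : ∀ i i' : Fin N, i < i' → i'.1 < m → η i < η i')
    (hsym : ∀ i i' : Fin N, i ≤ i' → m ≤ i.1 → η i ≤ η i')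
    (T : Fin N → ℕ → ℕ) (hT : Adm N η T)
    (hlt : ∀ i : Fin m, evalT N η T (i.1 + 1) < m)
    (hinj : Function.Injective fun i : Fin m => evalT N η T (i.1 + 1))
    (hgood : ∀ c, 1 ≤ c → c ≤ m → ∀ j : ℕ, 1 ≤ j →
      ((∃ i : Fin N, j ≤ η i ∧ T i j = c) ↔ j ≤ evalT N η T c)) :
    ∀ c, 1 ≤ c → c ≤ m → ∀ (i i' : Fin N) (j j' : ℕ), 1 ≤ j → j ≤ j' →
      j ≤ η i → j' ≤ η i' → T i j = c → T i' j' = c →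
      i'.1 ≤ i.1 ∧ i.1 + 1 ≤ c := by
  obtain ⟨h1, h2, h3, h4⟩ := hT
  intro c hc1 hcm
  have hA : ∀ j, 1 ≤ j → ∀ i : Fin N, j ≤ η i → T i j = c → i.1 + 1 ≤ c := by
    intro j
    induction j with
    | zero => omega
    | succ j ih =>
      intro _ i hji hTi
      by_cases hj : j = 0
      · subst hj
        have := h4 i (by omega)
        simp only [Nat.zero_add] at hTi
        omega
      · have hj1 : 1 ≤ j := by omega
        have hev : j + 1 ≤ evalT N η T c :=
          (hgood c hc1 hcm (j + 1) (by omega)).1 ⟨i, hji, hTi⟩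
        obtain ⟨i0, hi0, hTi0⟩ := (hgood c hc1 hcm j hj1).2 (by omega)
        have hle : ¬ (i0 < i) := fun h => h3 i0 i j h hj1 hi0 hji (hTi.trans hTi0.symm)
        have h5 := ih hj1 i0 hi0 hTi0
        have h6 : i.1 ≤ i0.1 := not_lt.mp hle
        omega
  intro i i' j j' hj1 hjj' hji hj'i' hTi hTi'
  have hB : ∀ j', j ≤ j' → ∀ i' : Fin N, j' ≤ η i' → T i' j' = c → i'.1 ≤ i.1 := by
    intro j' hjj'
    induction j', hjj' using Nat.le_induction with
    | base =>
      intro i' hji' hTi'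
      have : i = i' := h2 i i' j hj1 hji hji' (hTi.trans hTi'.symm)
      omega
    | succ k hk ih =>
      intro i' hki' hTi'
      have hk1 : 1 ≤ k := by omega
      have hev : k + 1 ≤ evalT N η T c :=
        (hgood c hc1 hcm (k + 1) (by omega)).1 ⟨i', hki', hTi'⟩
      obtain ⟨i0, hi0, hTi0⟩ := (hgood c hc1 hcm k hk1).2 (by omega)
      have hle : ¬ (i0 < i') := fun h => h3 i0 i' k h hk1 hi0 hki' (hTi'.trans hTi0.symm)
      have h5 := ih i0 hi0 hTi0
      have h6 : i'.1 ≤ i0.1 := not_lt.mp hle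
      omega
  exact ⟨hB j' hjj' i' hj'i' hTi', hA j hj1 i hji hTi⟩

end
end
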